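/- Energy distance via distribution functions in one dimension: for probability distributions P₀', P₁' on ℝ with finite first moments and CDFs F₀, F₁, the energy distance with α = 1 satisfies ε₁(P₀',P₁') = 2 ∫_{−∞}^{∞} (F₀(t) − F₁(t))² dt. -/

import Mathlib

open MeasureTheory ProbabilityTheory

open Set ENNReal

noncomputable def g (t x y : ℝ) : ℝ≥0∞ :=
  (if x ≤ t ∧ t < y then 1 else 0) + (if y ≤ t ∧ t < x then 1 else 0)

lemma hS1 : MeasurableSet {p : ℝ × ℝ × ℝ | p.2.1 ≤ p.1 ∧ p.1 < p.2.2} :=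
  (measurableSet_le measurable_snd.fst measurable_fst).inter
    (measurableSet_lt measurable_fst measurable_snd.snd)

lemma hS2 : MeasurableSet {p : ℝ × ℝ × ℝ | p.2.2 ≤ p.1 ∧ p.1 < p.2.1} :=
  (measurableSet_le measurable_snd.snd measurable_fst).inter
    (measurableSet_lt measurable_fst measurable_snd.fst)

lemma g_meas : Measurable (fun p : ℝ × ℝ × ℝ => g p.1 p.2.1 p.2.2) := by
  unfold g
  exact (Measurable.ite hS1 measurable_const measurable_const).add
    (Measurable.ite hS2 measurable_const measurable_const)

lemma lint_g (x y : ℝ) : ∫⁻ t, g t x y = ENNReal.ofReal |x - y| := by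
  have h1 : ∀ a b : ℝ, ∫⁻ t, (if a ≤ t ∧ t < b then (1:ℝ≥0∞) else 0) = ENNReal.ofReal (b - a) := by
    intro a b
    have he : (fun t => if a ≤ t ∧ t < b then (1:ℝ≥0∞) else 0) = (Ico a b).indicator 1 := by
      ext t; simp [Set.indicator_apply, Set.mem_Ico]
    rw [he, lintegral_indicator_one measurableSet_Ico, Real.volume_Ico]
  unfold g
  rw [lintegral_add_left, h1, h1]
  · rcases le_total x y with h | h
    · rw [abs_of_nonpos (by linarith),
        show ENNReal.ofReal (x - y) = 0 from ENNReal.ofReal_of_nonpos (by linarith),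
        add_zero, neg_sub]
    · rw [abs_of_nonneg (by linarith),
        show ENNReal.ofReal (y - x) = 0 from ENNReal.ofReal_of_nonpos (by linarith),
        zero_add]
  · have he : (fun t => if x ≤ t ∧ t < y then (1:ℝ≥0∞) else 0) = (Ico x y).indicator 1 := by
      ext t; simp [Set.indicator_apply, Set.mem_Ico]
    rw [he]; exact measurable_const.indicator measurableSet_Ico

lemma lint_g_xy (μ ν : Measure ℝ) (t : ℝ) :
    ∫⁻ x, ∫⁻ y, g t x y ∂ν ∂μ = μ (Iic t) * ν (Ioi t) + ν (Iic t) * μ (Ioi t) := by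
  have inner : ∀ x, ∫⁻ y, g t x y ∂ν
      = (if x ≤ t then ν (Ioi t) else 0) + (if t < x then ν (Iic t) else 0) := by
    intro x
    unfold g
    rw [lintegral_add_left]
    · congr 1
      · by_cases hx : x ≤ t
        · simp only [hx, true_and, if_true]
          have he : (fun y => if t < y then (1:ℝ≥0∞) else 0) = (Ioi t).indicator 1 := by
            ext y; simp [Set.indicator_apply]
          rw [he, lintegral_indicator_one measurableSet_Ioi]
        · simp [hx]
      · by_cases hx : t < x
        · simp only [hx, and_true, if_true]
          have he : (fun y => if y ≤ t then (1:ℝ≥0∞) else 0) = (Iic t).indicator 1 := by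
            ext y; simp [Set.indicator_apply]
          rw [he, lintegral_indicator_one measurableSet_Iic]
        · simp [hx]
    · have he : (fun y => if x ≤ t ∧ t < y then (1:ℝ≥0∞) else 0)
          = if x ≤ t then (Ioi t).indicator 1 else 0 := by
        by_cases hx : x ≤ t <;> ext y <;> simp [hx, Set.indicator_apply]
      rw [he]
      by_cases hx : x ≤ t <;> simp only [hx, if_true, if_false]
      · exact measurable_const.indicator measurableSet_Ioi
      · exact measurable_const
  simp_rw [inner]
  rw [lintegral_add_left]
  · congr 1
    · have he : (fun x => if x ≤ t then ν (Ioi t) else 0)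
          = (Iic t).indicator (fun _ => ν (Ioi t)) := by
        ext x; simp [Set.indicator_apply]
      rw [he, lintegral_indicator_const measurableSet_Iic, mul_comm]
    · have he : (fun x => if t < x then ν (Iic t) else 0)
          = (Ioi t).indicator (fun _ => ν (Iic t)) := by
        ext x; simp [Set.indicator_apply]
      rw [he, lintegral_indicator_const measurableSet_Ioi]
  · have he : (fun x => if x ≤ t then ν (Ioi t) else 0)
        = (Iic t).indicator (fun _ => ν (Ioi t)) := by
      ext x; simp [Set.indicator_apply]
    rw [he]; exact measurable_const.indicator measurableSet_Iic

lemma swap_core (μ ν : Measure ℝ) [IsProbabilityMeasure μ] [IsProbabilityMeasure ν] :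
    ∫⁻ x, ∫⁻ y, ENNReal.ofReal |x - y| ∂ν ∂μ
      = ∫⁻ t, (μ (Iic t) * ν (Ioi t) + ν (Iic t) * μ (Ioi t)) := by
  have step1 : ∫⁻ x, ∫⁻ y, ENNReal.ofReal |x - y| ∂ν ∂μ
      = ∫⁻ x, ∫⁻ t, ∫⁻ y, g t x y ∂ν ∂(volume) ∂μ := by
    apply lintegral_congr; intro x
    calc ∫⁻ y, ENNReal.ofReal |x - y| ∂ν = ∫⁻ y, ∫⁻ t, g t x y ∂(volume) ∂ν := by
          apply lintegral_congr; intro y; rw [lint_g]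
      _ = ∫⁻ t, ∫⁻ y, g t x y ∂ν ∂(volume) := by
          apply lintegral_lintegral_swap
          exact (g_meas.comp (by fun_prop : Measurable fun p : ℝ × ℝ => (p.2, x, p.1))).aemeasurable
  rw [step1]
  rw [lintegral_lintegral_swap]
  · exact lintegral_congr fun t => lint_g_xy μ ν t
  · have hm : Measurable fun p : (ℝ × ℝ) × ℝ => g p.1.2 p.1.1 p.2 :=
      g_meas.comp (by fun_prop : Measurable fun p : (ℝ × ℝ) × ℝ => (p.1.2, p.1.1, p.2))
    exact (Measurable.lintegral_prod_right
      (f := fun (p : ℝ × ℝ) (y : ℝ) => g p.2 p.1 y) hm).aemeasurable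

lemma lint_abs_lt_top {μ : Measure ℝ} (hμ : Integrable (fun x : ℝ => |x|) μ) :
    ∫⁻ x, ENNReal.ofReal |x| ∂μ < ⊤ := by
  have := hμ.hasFiniteIntegral
  simpa [HasFiniteIntegral, ← ofReal_norm, Real.norm_eq_abs, abs_abs] using this

lemma fin_core (μ ν : Measure ℝ) [IsProbabilityMeasure μ] [IsProbabilityMeasure ν]
    (hμ : Integrable (fun x : ℝ => |x|) μ) (hν : Integrable (fun x : ℝ => |x|) ν) :
    ∫⁻ x, ∫⁻ y, ENNReal.ofReal |x - y| ∂ν ∂μ < ⊤ := by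
  have hb : ∀ x : ℝ, ∫⁻ y, ENNReal.ofReal |x - y| ∂ν
      ≤ ENNReal.ofReal |x| + ∫⁻ y, ENNReal.ofReal |y| ∂ν := by
    intro x
    calc ∫⁻ y, ENNReal.ofReal |x - y| ∂ν
        ≤ ∫⁻ y, (ENNReal.ofReal |x| + ENNReal.ofReal |y|) ∂ν := by
          apply lintegral_mono; intro y
          simp only []
          rw [← ENNReal.ofReal_add (abs_nonneg _) (abs_nonneg _)]
          exact ENNReal.ofReal_le_ofReal (abs_sub _ _)
      _ = ENNReal.ofReal |x| + ∫⁻ y, ENNReal.ofReal |y| ∂ν := by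
          rw [lintegral_add_left measurable_const, lintegral_const, measure_univ, mul_one]
  calc ∫⁻ x, ∫⁻ y, ENNReal.ofReal |x - y| ∂ν ∂μ
      ≤ ∫⁻ x, (ENNReal.ofReal |x| + ∫⁻ y, ENNReal.ofReal |y| ∂ν) ∂μ := lintegral_mono hb
    _ = (∫⁻ x, ENNReal.ofReal |x| ∂μ) + ∫⁻ y, ENNReal.ofReal |y| ∂ν := by
        rw [lintegral_add_right _ measurable_const, lintegral_const, measure_univ, mul_one]
    _ < ⊤ := ENNReal.add_lt_top.mpr ⟨lint_abs_lt_top hμ, lint_abs_lt_top hν⟩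

lemma meas_Iic (μ : Measure ℝ) : Measurable fun t => μ (Iic t) := by
  apply Monotone.measurable
  intro a b hab
  exact measure_mono (Iic_subset_Iic.mpr hab)

lemma meas_Ioi (μ : Measure ℝ) : Measurable fun t => μ (Ioi t) := by
  apply Antitone.measurable
  intro a b hab
  exact measure_mono (Ioi_subset_Ioi hab)

lemma toReal_AB (μ ν : Measure ℝ) [IsProbabilityMeasure μ] [IsProbabilityMeasure ν] (t : ℝ) :
    (μ (Iic t) * ν (Ioi t)).toReal = cdf μ t * (1 - cdf ν t) := by
  rw [ENNReal.toReal_mul, cdf_eq_real, measureReal_def]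
  congr 1
  rw [← compl_Iic, measure_compl measurableSet_Iic (measure_ne_top _ _), measure_univ,
    ENNReal.toReal_sub_of_le prob_le_one ENNReal.one_ne_top, ENNReal.toReal_one, cdf_eq_real, measureReal_def]

lemma int_prod (μ ν : Measure ℝ) [IsProbabilityMeasure μ] [IsProbabilityMeasure ν]
    (hμ : Integrable (fun x : ℝ => |x|) μ) (hν : Integrable (fun x : ℝ => |x|) ν) :
    Integrable (fun t => cdf μ t * (1 - cdf ν t)) volume := by
  have h := (swap_core μ ν) ▸ (fin_core μ ν hμ hν)
  have hA : ∫⁻ t, μ (Iic t) * ν (Ioi t) ≠ ⊤ := by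
    refine ne_top_of_le_ne_top h.ne ?_
    exact lintegral_mono fun t => le_add_right le_rfl
  have := integrable_toReal_of_lintegral_ne_top
    (((meas_Iic μ).mul (meas_Ioi ν)).aemeasurable) hA
  refine this.congr (Filter.Eventually.of_forall fun t => ?_)
  exact toReal_AB μ ν t

lemma pair_eq (μ ν : Measure ℝ) [IsProbabilityMeasure μ] [IsProbabilityMeasure ν]
    (hμ : Integrable (fun x : ℝ => |x|) μ) (hν : Integrable (fun x : ℝ => |x|) ν) :
    ∫ x, ∫ y, |x - y| ∂ν ∂μ
      = ∫ t, (cdf μ t * (1 - cdf ν t) + cdf ν t * (1 - cdf μ t)) := by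
  have hLfin : ∀ x : ℝ, ∫⁻ y, ENNReal.ofReal |x - y| ∂ν < ⊤ := by
    intro x
    calc ∫⁻ y, ENNReal.ofReal |x - y| ∂ν
        ≤ ∫⁻ y, (ENNReal.ofReal |x| + ENNReal.ofReal |y|) ∂ν := by
          apply lintegral_mono; intro y
          simp only []
          rw [← ENNReal.ofReal_add (abs_nonneg _) (abs_nonneg _)]
          exact ENNReal.ofReal_le_ofReal (abs_sub _ _)
      _ = ENNReal.ofReal |x| + ∫⁻ y, ENNReal.ofReal |y| ∂ν := by
          rw [lintegral_add_left measurable_const, lintegral_const, measure_univ, mul_one]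
      _ < ⊤ := ENNReal.add_lt_top.mpr ⟨ENNReal.ofReal_lt_top, lint_abs_lt_top hν⟩
  have hmeasL : Measurable fun x => ∫⁻ y, ENNReal.ofReal |x - y| ∂ν := by
    apply Measurable.lintegral_prod_right (f := fun x y => ENNReal.ofReal |x - y|)
    exact ENNReal.measurable_ofReal.comp (measurable_fst.sub measurable_snd).abs
  have step1 : ∫ x, ∫ y, |x - y| ∂ν ∂μ
      = (∫⁻ x, ∫⁻ y, ENNReal.ofReal |x - y| ∂ν ∂μ).toReal := by
    have inner : ∀ x : ℝ, ∫ y, |x - y| ∂ν = (∫⁻ y, ENNReal.ofReal |x - y| ∂ν).toReal := by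
      intro x
      have hsm : AEStronglyMeasurable (fun y : ℝ => |x - y|) ν := by
        apply Measurable.aestronglyMeasurable
        exact (measurable_const.sub measurable_id).abs
      rw [integral_eq_lintegral_of_nonneg_ae
        (Filter.Eventually.of_forall fun y => abs_nonneg _) hsm]
    simp_rw [inner]
    rw [← integral_toReal hmeasL.aemeasurable (Filter.Eventually.of_forall hLfin)]
  rw [step1, swap_core]
  rw [← integral_toReal]
  · apply integral_congr_ae
    refine Filter.Eventually.of_forall fun t => ?_
    show (μ (Iic t) * ν (Ioi t) + ν (Iic t) * μ (Ioi t)).toReal = _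
    rw [ENNReal.toReal_add, toReal_AB, toReal_AB]
    · exact (ENNReal.mul_lt_top (measure_lt_top _ _) (measure_lt_top _ _)).ne
    · exact (ENNReal.mul_lt_top (measure_lt_top _ _) (measure_lt_top _ _)).ne
  · exact (((meas_Iic μ).mul (meas_Ioi ν)).add ((meas_Iic ν).mul (meas_Ioi μ))).aemeasurable
  · refine Filter.Eventually.of_forall fun t => ?_
    exact ENNReal.add_lt_top.mpr ⟨ENNReal.mul_lt_top (measure_lt_top _ _) (measure_lt_top _ _),
      ENNReal.mul_lt_top (measure_lt_top _ _) (measure_lt_top _ _)⟩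

/-- Energy distance via distribution functions: for probability distributions P₀', P₁' on ℝ with
finite first moments and cumulative distribution functions F₀, F₁,
ε₁(P₀',P₁') = 2E|X−Y| − E|X−X'| − E|Y−Y'| = 2 ∫ (F₀(t) − F₁(t))² dt. -/
theorem energy_distance_eq_cdf_integral
    (P₀ P₁ : Measure ℝ) [IsProbabilityMeasure P₀] [IsProbabilityMeasure P₁]
    (h₀ : Integrable (fun x : ℝ => |x|) P₀) (h₁ : Integrable (fun x : ℝ => |x|) P₁) :
    2 * (∫ x, ∫ y, |x - y| ∂P₁ ∂P₀)
      - (∫ x, ∫ x', |x - x'| ∂P₀ ∂P₀)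
      - (∫ y, ∫ y', |y - y'| ∂P₁ ∂P₁)
      = 2 * ∫ t : ℝ, (cdf P₀ t - cdf P₁ t) ^ 2 := by
  rw [pair_eq P₀ P₁ h₀ h₁, pair_eq P₀ P₀ h₀ h₀, pair_eq P₁ P₁ h₁ h₁]
  have i01 := int_prod P₀ P₁ h₀ h₁
  have i10 := int_prod P₁ P₀ h₁ h₀
  have i00 := int_prod P₀ P₀ h₀ h₀
  have i11 := int_prod P₁ P₁ h₁ h₁
  have u1 : Integrable (fun t => cdf P₀ t * (1 - cdf P₁ t) + cdf P₁ t * (1 - cdf P₀ t)) volume :=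
    i01.add i10
  have u2 : Integrable (fun t => cdf P₀ t * (1 - cdf P₀ t) + cdf P₀ t * (1 - cdf P₀ t)) volume :=
    i00.add i00
  have u3 : Integrable (fun t => cdf P₁ t * (1 - cdf P₁ t) + cdf P₁ t * (1 - cdf P₁ t)) volume :=
    i11.add i11
  have key : (∫ t, (2 * (cdf P₀ t * (1 - cdf P₁ t) + cdf P₁ t * (1 - cdf P₀ t))
        - (cdf P₀ t * (1 - cdf P₀ t) + cdf P₀ t * (1 - cdf P₀ t))
        - (cdf P₁ t * (1 - cdf P₁ t) + cdf P₁ t * (1 - cdf P₁ t))))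
      = 2 * (∫ t, (cdf P₀ t * (1 - cdf P₁ t) + cdf P₁ t * (1 - cdf P₀ t)))
        - (∫ t, (cdf P₀ t * (1 - cdf P₀ t) + cdf P₀ t * (1 - cdf P₀ t)))
        - (∫ t, (cdf P₁ t * (1 - cdf P₁ t) + cdf P₁ t * (1 - cdf P₁ t))) := by
    have w12 : Integrable (fun t => 2 * (cdf P₀ t * (1 - cdf P₁ t) + cdf P₁ t * (1 - cdf P₀ t))
        - (cdf P₀ t * (1 - cdf P₀ t) + cdf P₀ t * (1 - cdf P₀ t))) volume :=
      (u1.const_mul 2).sub u2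
    rw [integral_sub w12 u3, integral_sub (u1.const_mul 2) u2, integral_const_mul]
  rw [← key, ← integral_const_mul]
  apply integral_congr_ae
  refine Filter.Eventually.of_forall fun t => ?_
  ring
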